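/- Let psi : DihedralGroup 3 → Multiplicative (ZMod 2) be the group homomorphism sending every rotation rᵢ to 0 and every reflection srᵢ to 1 (written additively in ZMod 2), and let ψ̃ : ℤ[DihedralGroup 3] → ℤ[ZMod 2] be the induced ring homomorphism of integral group rings. Then the image under ψ̃ of the center of ℤ[DihedralGroup 3] is not all of ℤ[ZMod 2]; i.e., there exists y ∈ ℤ[ZMod 2] such that no central element x of ℤ[DihedralGroup 3] satisfies ψ̃(x) = y. (Hence the classical center construction, applied to ring homomorphisms by restriction, is not functorial.) -/

import Mathlib

def dEquiv : (ZMod 3) ⊕ (ZMod 3) ≃ DihedralGroup 3 where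
  toFun := Sum.elim DihedralGroup.r DihedralGroup.sr
  invFun x := match x with
    | DihedralGroup.r i => Sum.inl i
    | DihedralGroup.sr i => Sum.inr i
  left_inv := by rintro (i | i) <;> rfl
  right_inv := by rintro (i | i) <;> rfl



/-- Let `ψ : DihedralGroup 3 →* Multiplicative (ZMod 2)` send every
rotation to `0` and every reflection to `1`, and let
`ψ̃ : ℤ[DihedralGroup 3] →+* ℤ[ZMod 2]` be the induced ring homomorphism of
integral group rings.  Then the image under `ψ̃` of the center of
`ℤ[DihedralGroup 3]` is not all of `ℤ[ZMod 2]`: some `y` is not `ψ̃ x` for any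
central `x`.  (Hence the classical center construction is not functorial.) -/
theorem center_image_not_surjective
    (ψ : DihedralGroup 3 →* Multiplicative (ZMod 2))
    (hψr : ∀ i : ZMod 3, ψ (DihedralGroup.r i) = Multiplicative.ofAdd (0 : ZMod 2))
    (hψs : ∀ i : ZMod 3, ψ (DihedralGroup.sr i) = Multiplicative.ofAdd (1 : ZMod 2)) :
    ∃ y : MonoidAlgebra ℤ (Multiplicative (ZMod 2)),
      ∀ x ∈ Subring.center (MonoidAlgebra ℤ (DihedralGroup 3)),
        MonoidAlgebra.mapDomainRingHom ℤ ψ x ≠ y := by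
  classical
  refine ⟨MonoidAlgebra.single (Multiplicative.ofAdd (1 : ZMod 2)) 1, fun x hx h => ?_⟩
  rw [Subring.mem_center_iff] at hx
  have h1 := hx (MonoidAlgebra.single (DihedralGroup.r 1) 1)
  have key : ∀ k : ZMod 3, x.coeff (DihedralGroup.sr (k + 1)) = x.coeff (DihedralGroup.sr (k - 1)) := by
    intro k
    have := congr_arg (fun f : MonoidAlgebra ℤ (DihedralGroup 3) => f.coeff (DihedralGroup.sr k)) h1
    beta_reduce at this
    rw [MonoidAlgebra.coeff_single_mul_apply, MonoidAlgebra.coeff_mul_single_apply] at this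
    have hinv : (DihedralGroup.r 1 : DihedralGroup 3)⁻¹ = DihedralGroup.r (-1) := rfl
    rw [hinv, DihedralGroup.r_mul_sr, DihedralGroup.sr_mul_r, sub_neg_eq_add] at this
    simpa [sub_eq_add_neg] using this
  have e1 : x.coeff (DihedralGroup.sr 1) = x.coeff (DihedralGroup.sr 2) := by
    have h0 := key 0
    have : (0 : ZMod 3) - 1 = 2 := by decide
    rw [this] at h0; simpa using h0
  have e2 : x.coeff (DihedralGroup.sr 0) = x.coeff (DihedralGroup.sr 1) := by
    have h0 := key 2
    have ha : (2 : ZMod 3) + 1 = 0 := by decide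
    have hb : (2 : ZMod 3) - 1 = 1 := by decide
    rw [ha, hb] at h0; exact h0
  -- decompose x as a sum of singles
  have hxdec : x = ∑ g : DihedralGroup 3, MonoidAlgebra.single g (x.coeff g) := by
    ext h; simp [MonoidAlgebra.coeff_sum, Finsupp.single_apply]
  have hc : (MonoidAlgebra.mapDomainRingHom ℤ ψ x).coeff (Multiplicative.ofAdd (1 : ZMod 2))
      = ∑ g : DihedralGroup 3,
          if ψ g = Multiplicative.ofAdd (1 : ZMod 2) then x.coeff g else 0 := by
    conv_lhs => rw [hxdec]
    rw [map_sum, MonoidAlgebra.coeff_sum, Finset.sum_apply']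
    refine Finset.sum_congr rfl fun g _ => ?_
    simp [MonoidAlgebra.mapDomainRingHom, Finsupp.mapDomain_single, Finsupp.single_apply,
      MonoidAlgebra.coeff_single]
  rw [h] at hc
  have hsum : ∑ g : DihedralGroup 3, (if ψ g = Multiplicative.ofAdd (1 : ZMod 2) then x.coeff g else 0)
      = ∑ s : (ZMod 3) ⊕ (ZMod 3),
          (if ψ (dEquiv s) = Multiplicative.ofAdd (1 : ZMod 2) then x.coeff (dEquiv s) else 0) :=
    (Fintype.sum_equiv dEquiv _ _ (fun s => rfl)).symm
  rw [hsum, Fintype.sum_sum_type] at hc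
  have hne : Multiplicative.ofAdd (0 : ZMod 2) ≠ Multiplicative.ofAdd (1 : ZMod 2) := by decide
  simp only [dEquiv, Equiv.coe_fn_mk, Sum.elim_inl, Sum.elim_inr, hψr, hψs, if_neg hne,
    if_pos rfl, if_true, Finset.sum_const_zero, zero_add, MonoidAlgebra.coeff_single, Finsupp.single_eq_same] at hc
  have h3 : ∑ i : ZMod 3, x.coeff (DihedralGroup.sr i)
      = x.coeff (DihedralGroup.sr 0) + x.coeff (DihedralGroup.sr 1) + x.coeff (DihedralGroup.sr 2) := by
    show ∑ i : Fin 3, x.coeff (DihedralGroup.sr i) = _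
    rw [Fin.sum_univ_three]; rfl
  rw [h3, e2, e1] at hc
  omega
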